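/- For every d ∈ ℕ and every real x ∈ (0, 1) such that the series Σ_{n≥1} A_{d+1,n} x^{n−1} converges, the family ( −(1/2) · log(1 − x^{|t|}) )_{t ∈ T_d} is summable and Σ_{t ∈ T_d} −(1/2) · log(1 − x^{|t|}) = (1/2) · log( Σ_{n≥1} A_{d+1,n} x^{n−1} ). -/

import Mathlib

/-- Rooted unlabeled trees of depth at most `d`: `T_0` is the single-vertex tree and
`T_{d+1}` is the type of multisets of trees in `T_d`. -/
def TreeT : ℕ → Type
  | 0 => PUnit
  | d + 1 => Multiset (TreeT d)

/-- Number of vertices of a tree. -/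
def treeSize : (d : ℕ) → TreeT d → ℕ
  | 0, _ => 1
  | d + 1, m => 1 + (Multiset.map (treeSize d) (m : Multiset (TreeT d))).sum

/-- `aCount d n` is the number of rooted unlabeled trees of depth at most `d`
with exactly `n` vertices. -/
noncomputable def aCount (d n : ℕ) : ℕ :=
  {t : TreeT d | treeSize d t = n}.ncard

open Filter

lemma treeT_succ (d : ℕ) : TreeT (d+1) = Multiset (TreeT d) := rfl

lemma treeSize_succ (d : ℕ) (m : Multiset (TreeT d)) :
    treeSize (d+1) m = 1 + (Multiset.map (treeSize d) m).sum := rfl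

lemma one_le_treeSize (d : ℕ) (t : TreeT d) : 1 ≤ treeSize d t := by
  cases d with
  | zero => exact le_refl _
  | succ d => exact Nat.le_add_right _ _

lemma treeT_finite (d n : ℕ) : {t : TreeT d | treeSize d t ≤ n}.Finite := by
  induction d generalizing n with
  | zero =>
    haveI : Finite (TreeT 0) := inferInstanceAs (Finite PUnit.{1})
    exact Set.toFinite _
  | succ d ih =>
    classical
    have hS : {τ : TreeT d | treeSize d τ ≤ n}.Finite := ih n
    set A : Finset (TreeT d) := hS.toFinset with hA
    have hfin : {m : Multiset (TreeT d) | m ≤ n • A.val}.Finite := by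
      refine Set.Finite.subset ((n • A.val).powerset.toFinset.finite_toSet) ?_
      intro m hm
      simp only [Finset.coe_sort_coe, Finset.mem_coe, Multiset.mem_toFinset, Multiset.mem_powerset]
      exact hm
    refine hfin.subset ?_
    intro m hm
    have hm' : treeSize (d+1) m ≤ n := hm
    rw [treeSize_succ] at hm'
    have hsum : (Multiset.map (treeSize d) m).sum ≤ n := le_trans (Nat.le_add_left _ _) hm'
    have hcard : Multiset.card m ≤ n := by
      have h1 : Multiset.card (Multiset.map (treeSize d) m) • 1 ≤ (Multiset.map (treeSize d) m).sum := by
        apply Multiset.card_nsmul_le_sum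
        intro x hx
        obtain ⟨t, _, rfl⟩ := Multiset.mem_map.mp hx
        exact one_le_treeSize d t
      simpa using le_trans h1 hsum
    have hmem : ∀ τ ∈ m, τ ∈ A := by
      intro τ hτ
      rw [hA, Set.Finite.mem_toFinset]
      have : treeSize d τ ≤ (Multiset.map (treeSize d) m).sum :=
        Multiset.single_le_sum (fun x _ => Nat.zero_le x) _ (Multiset.mem_map_of_mem _ hτ)
      exact le_trans this hsum
    show m ≤ n • A.val
    rw [Multiset.le_iff_count]
    intro a
    by_cases ha : a ∈ m
    · have h1 : m.count a ≤ Multiset.card m := Multiset.count_le_card _ _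
      have h2 : A.val.count a = 1 := Multiset.count_eq_one_of_mem A.nodup (hmem a ha)
      rw [Multiset.count_nsmul, h2, mul_one]
      exact le_trans h1 hcard
    · simp [Multiset.count_eq_zero_of_notMem ha]

open Filter

lemma hasSum_pi_geometric : ∀ (β : Type) [Fintype β], ∀ (v : β → ℝ), (∀ b, 0 ≤ v b) → (∀ b, v b < 1) →
    HasSum (fun g : β → ℕ => ∏ b, v b ^ g b) (∏ b, (1 - v b)⁻¹) := by
  refine Fintype.induction_empty_option ?_ ?_ ?_
  · -- equiv transfer
    intro α β _ e hα v h0 h1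
    letI : Fintype α := Fintype.ofEquiv β e.symm
    have h := hα (v ∘ e) (fun a => h0 _) (fun a => h1 _)
    set E : (α → ℕ) ≃ (β → ℕ) := Equiv.arrowCongr e (Equiv.refl ℕ) with hE
    have key2 : (∏ b, (1 - v b)⁻¹) = ∏ a, (1 - (v ∘ e) a)⁻¹ :=
      (Equiv.prod_comp e (fun b => (1 - v b)⁻¹)).symm
    have hfe : ((fun g : β → ℕ => ∏ b, v b ^ g b) ∘ E) = fun g' : α → ℕ => ∏ a, (v ∘ e) a ^ g' a := by
      funext g'
      simp only [Function.comp_apply]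
      rw [← Equiv.prod_comp e (fun b => v b ^ (E g') b)]
      refine Finset.prod_congr rfl fun a _ => ?_
      simp [hE, Equiv.arrowCongr]
    rw [key2]
    exact E.hasSum_iff.mp (by rw [hfe]; exact h)
  · -- empty
    intro v _ _
    haveI : Unique (PEmpty → ℕ) := ⟨⟨fun x => x.elim⟩, fun f => funext fun x => x.elim⟩
    have h1 : (fun g : PEmpty → ℕ => ∏ b, v b ^ g b) = fun _ => (1:ℝ) := by
      funext g; exact Finset.prod_of_isEmpty _
    rw [h1, show (∏ b : PEmpty, (1 - v b)⁻¹) = 1 from Finset.prod_of_isEmpty _]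
    simpa using hasSum_single (f := fun _ : (PEmpty → ℕ) => (1:ℝ)) default
      (fun b hb => absurd (Subsingleton.elim b default) hb)
  · -- option
    intro α _ hα v h0 h1
    have hgeo : HasSum (fun k : ℕ => v none ^ k) (1 - v none)⁻¹ :=
      hasSum_geometric_of_lt_one (h0 none) (h1 none)
    have hrest := hα (v ∘ some) (fun a => h0 _) (fun a => h1 _)
    have hmulsum : Summable (fun p : ℕ × (α → ℕ) => (v none ^ p.1) * ∏ a, (v ∘ some) a ^ p.2 a) := by
      apply Summable.mul_of_nonneg hgeo.summable hrest.summable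
      · intro k; exact pow_nonneg (h0 none) _
      · intro g; exact Finset.prod_nonneg fun a _ => pow_nonneg (h0 _) _
    have hmul := hgeo.mul hrest hmulsum
    set E : (Option α → ℕ) ≃ ℕ × (α → ℕ) := Equiv.piOptionEquivProd with hE
    rw [Fintype.prod_option]
    have hfe : ((fun g : Option α → ℕ => ∏ b, v b ^ g b) ∘ E.symm)
        = fun p : ℕ × (α → ℕ) => (v none ^ p.1) * ∏ a, (v ∘ some) a ^ p.2 a := by
      funext p
      simp only [Function.comp_apply]
      rw [Fintype.prod_option]
      have h1 : (E.symm p) none = p.1 := rfl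
      have h2 : ∀ a, (E.symm p) (some a) = p.2 a := fun a => rfl
      rw [h1]
      rfl
    exact E.symm.hasSum_iff.mp (by rw [hfe]; exact hmul)

lemma hasSum_indicator_finsupp_prod {α : Type} (w : α → ℝ) (h0 : ∀ a, 0 ≤ w a) (h1 : ∀ a, w a < 1)
    (s : Finset α) :
    HasSum (Set.indicator {f : α →₀ ℕ | ↑f.support ⊆ (s : Set α)}
        (fun f : α →₀ ℕ => f.prod fun a k => w a ^ k))
      (∏ a ∈ s, (1 - w a)⁻¹) := by
  classical
  rw [← hasSum_subtype_iff_indicator]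
  set E : (↥(s : Set α) → ℕ) ≃ {f : α →₀ ℕ // ↑f.support ⊆ (s : Set α)} :=
    ((Finsupp.restrictSupportEquiv (s : Set α) ℕ).trans Finsupp.equivFunOnFinite).symm with hEdef
  have hfin := hasSum_pi_geometric (↥(s : Set α)) (fun b => w ↑b) (fun b => h0 _) (fun b => h1 _)
  have hprod : (∏ b : ↥(s : Set α), (1 - w ↑b)⁻¹) = ∏ a ∈ s, (1 - w a)⁻¹ :=
    Finset.prod_coe_sort s (fun a => (1 - w a)⁻¹)
  rw [← hprod]
  refine E.hasSum_iff.mp ?_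
  have hfe : (((fun f : α →₀ ℕ => f.prod fun a k => w a ^ k) ∘ Subtype.val) ∘ ⇑E) =
        fun g : ↥(s : Set α) → ℕ => ∏ b : ↥(s : Set α), w ↑b ^ g b := by
    funext g
    simp only [Function.comp_apply]
    have hsub : Finsupp.subtypeDomain (· ∈ (s : Set α)) ((E g : {f : α →₀ ℕ // ↑f.support ⊆ (s : Set α)}) : α →₀ ℕ)
        = Finsupp.equivFunOnFinite.symm g := by
      rw [hEdef]
      exact (Finsupp.restrictSupportEquiv (s : Set α) ℕ).apply_symm_apply _
    have hptw : ∀ b : ↥(s : Set α), ((E g : {f : α →₀ ℕ // ↑f.support ⊆ (s : Set α)}) : α →₀ ℕ) ↑b = g b :=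
      fun b => DFunLike.congr_fun hsub b
    have hsupp : ((E g : {f : α →₀ ℕ // ↑f.support ⊆ (s : Set α)}) : α →₀ ℕ).support ⊆ s := by
      intro a ha
      exact (E g).2 ha
    rw [Finsupp.prod_of_support_subset _ hsupp _ (fun a _ => pow_zero _),
      ← Finset.prod_coe_sort s (fun a => w a ^ ((E g : {f : α →₀ ℕ // ↑f.support ⊆ (s : Set α)}) : α →₀ ℕ) a)]
    exact Finset.prod_congr rfl fun b _ => by rw [hptw b]
  have h2 : HasSum (((fun f : α →₀ ℕ => f.prod fun a k => w a ^ k) ∘ Subtype.val) ∘ ⇑E)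
      (∏ b : ↥(s : Set α), (1 - w ↑b)⁻¹) := by
    rw [hfe]; exact hfin
  exact h2

lemma hasProd_inv_one_sub {α : Type} (w : α → ℝ) (h0 : ∀ a, 0 ≤ w a) (h1 : ∀ a, w a < 1)
    {S : ℝ} (hFS : HasSum (fun f : α →₀ ℕ => f.prod fun a k => w a ^ k) S) :
    HasProd (fun a => (1 - w a)⁻¹) S := by
  classical
  set F : (α →₀ ℕ) → ℝ := fun f => f.prod fun a k => w a ^ k with hF
  have hF0 : ∀ f, 0 ≤ F f := fun f => Finset.prod_nonneg fun a _ => pow_nonneg (h0 a) _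
  set P : Finset α → ℝ := fun s => ∏ a ∈ s, (1 - w a)⁻¹ with hP
  have hPs : ∀ s : Finset α, HasSum (Set.indicator {f : α →₀ ℕ | ↑f.support ⊆ (s : Set α)} F) (P s) :=
    fun s => hasSum_indicator_finsupp_prod w h0 h1 s
  have hind_le : ∀ (s : Finset α) f, Set.indicator {f : α →₀ ℕ | ↑f.support ⊆ (s : Set α)} F f ≤ F f := by
    intro s f
    exact Set.indicator_le_self' (fun f _ => hF0 f) f
  have hPle : ∀ s, P s ≤ S := fun s => hasSum_le (hind_le s) (hPs s) hFS
  have hmono : Monotone P := by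
    intro s s' hss
    refine hasSum_le (fun f => ?_) (hPs s) (hPs s')
    refine Set.indicator_le_indicator_of_subset ?_ (fun f => hF0 f) f
    intro f hf
    exact subset_trans hf (Finset.coe_subset.mpr hss)
  have hbdd : BddAbove (Set.range P) := by
    refine ⟨S, ?_⟩
    rintro y ⟨s, rfl⟩
    exact hPle s
  have hlim : Filter.Tendsto P Filter.atTop (nhds (⨆ s, P s)) := tendsto_atTop_ciSup hmono hbdd
  have hsup : (⨆ s, P s) = S := by
    apply le_antisymm
    · exact ciSup_le hPle
    · rw [← hFS.tsum_eq]
      refine Summable.tsum_le_of_sum_le hFS.summable fun u => ?_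
      set s₀ : Finset α := u.sup (fun f => f.support) with hs₀
      have hsub : ∀ f ∈ u, f ∈ {f : α →₀ ℕ | ↑f.support ⊆ ((s₀ : Finset α) : Set α)} := by
        intro f hf
        exact fun a ha => Finset.coe_subset.mpr (Finset.le_sup (f := fun f => Finsupp.support f) hf) ha
      have h1' : ∑ f ∈ u, F f = ∑ f ∈ u, Set.indicator {f : α →₀ ℕ | ↑f.support ⊆ ((s₀ : Finset α) : Set α)} F f := by
        refine Finset.sum_congr rfl fun f hf => ?_
        rw [Set.indicator_of_mem (hsub f hf)]
      rw [h1']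
      refine le_trans (sum_le_hasSum u (fun f _ => Set.indicator_nonneg (fun f _ => hF0 f) f) (hPs s₀)) ?_
      exact le_ciSup hbdd s₀
  rw [← hsup]
  exact hlim


/-- For `x ∈ (0,1)` such that `Σ_{n≥1} A_{d+1,n} x^{n-1}` converges, the family
`(-(1/2) log(1 - x^{|t|}))_{t ∈ T_d}` is summable with sum
`(1/2) log( Σ_{n≥1} A_{d+1,n} x^{n-1} )`. -/
theorem kl_limit_sum (d : ℕ) (x : ℝ) (hx0 : 0 < x) (hx1 : x < 1)
    (hsum : Summable fun n : ℕ => (aCount (d + 1) (n + 1) : ℝ) * x ^ n) :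
    (Summable fun t : TreeT d => -(1 / 2 : ℝ) * Real.log (1 - x ^ treeSize d t)) ∧
    ∑' t : TreeT d, -(1 / 2 : ℝ) * Real.log (1 - x ^ treeSize d t) =
      (1 / 2 : ℝ) * Real.log (∑' n : ℕ, (aCount (d + 1) (n + 1) : ℝ) * x ^ n) := by
  classical
  set σ : TreeT d → ℕ := treeSize d with hσ
  set w : TreeT d → ℝ := fun t => x ^ σ t with hw
  set S : ℝ := ∑' n : ℕ, (aCount (d + 1) (n + 1) : ℝ) * x ^ n with hS
  set G : Multiset (TreeT d) → ℝ := fun m => x ^ ((m.map σ).sum) with hG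
  have h0w : ∀ t, 0 ≤ w t := fun t => pow_nonneg hx0.le _
  have h1w : ∀ t, w t < 1 := fun t =>
    pow_lt_one₀ hx0.le hx1 (Nat.one_le_iff_ne_zero.mp (one_le_treeSize d t))
  -- fibers of sizesum are finite
  have hfib : ∀ n : ℕ, {m : Multiset (TreeT d) | (m.map σ).sum = n}.Finite := by
    intro n
    refine (treeT_finite (d+1) (n+1)).subset ?_
    intro m hm
    show treeSize (d+1) m ≤ n + 1
    rw [treeSize_succ d m, ← hσ, hm]
    omega
  have hcard : ∀ n : ℕ, Nat.card {m : Multiset (TreeT d) // (m.map σ).sum = n}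
      = aCount (d+1) (n+1) := by
    intro n
    have e1 : {m : Multiset (TreeT d) // (m.map σ).sum = n}
        ≃ {t : TreeT (d+1) // treeSize (d+1) t = n + 1} := by
      refine Equiv.subtypeEquivRight fun m => ?_
      rw [treeSize_succ, ← hσ]
      omega
    rw [Nat.card_congr e1, aCount]
    exact Nat.card_coe_set_eq _
  -- HasSum G S
  have hGS : HasSum G S := by
    set f' : (Σ n : ℕ, {m : Multiset (TreeT d) // (m.map σ).sum = n}) → ℝ :=
      fun p => x ^ p.1 with hf'
    have hf'nn : ∀ p, (0:ℝ) ≤ f' p := fun p => pow_nonneg hx0.le _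
    have hfibsum : ∀ n, Summable (fun m : {m : Multiset (TreeT d) // (m.map σ).sum = n} =>
        f' ⟨n, m⟩) := by
      intro n
      haveI : Finite {m : Multiset (TreeT d) // (m.map σ).sum = n} := (hfib n).to_subtype
      exact Summable.of_finite
    have hconst : ∀ n, ∑' (m : {m : Multiset (TreeT d) // (m.map σ).sum = n}), f' ⟨n, m⟩
        = (aCount (d+1) (n+1) : ℝ) * x ^ n := by
      intro n
      have hc : ∀ m : {m : Multiset (TreeT d) // (m.map σ).sum = n}, f' ⟨n, m⟩ = x ^ n :=
        fun m => rfl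
      rw [tsum_congr hc, tsum_const, nsmul_eq_mul, hcard n]
    have hsf' : Summable f' := by
      refine (summable_sigma_of_nonneg hf'nn).mpr ⟨hfibsum, ?_⟩
      exact hsum.congr fun n => (hconst n).symm
    have hcomp : ∀ p, G ((Equiv.sigmaFiberEquiv (fun m : Multiset (TreeT d) => (m.map σ).sum)) p)
        = f' p := by
      rintro ⟨n, m, hm⟩
      simp only [Equiv.sigmaFiberEquiv, Equiv.coe_fn_mk, hG, hf']
      rw [hm]
    have hsumG : Summable G := by
      rw [← (Equiv.sigmaFiberEquiv (fun m : Multiset (TreeT d) => (m.map σ).sum)).summable_iff]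
      exact hsf'.congr fun p => (hcomp p).symm
    have htsum : ∑' m, G m = S := by
      rw [← (Equiv.sigmaFiberEquiv (fun m : Multiset (TreeT d) => (m.map σ).sum)).tsum_eq G]
      rw [tsum_congr hcomp, Summable.tsum_sigma hsf', hS]
      exact tsum_congr hconst
    exact htsum ▸ hsumG.hasSum
  -- HasSum F S via multiset/finsupp equiv
  have hclaim : ∀ m : Multiset (TreeT d),
      (Multiset.toFinsupp m).prod (fun a k => w a ^ k) = G m := by
    intro m
    induction m using Multiset.induction with
    | empty => simp [hG]
    | cons a m ih =>
      have h1 : Multiset.toFinsupp (a ::ₘ m) = (fun₀ | a => 1) + Multiset.toFinsupp m := by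
        rw [← Multiset.singleton_add, map_add, Multiset.toFinsupp_singleton]
      rw [h1, Finsupp.prod_add_index (fun a _ => pow_zero _) (fun a _ k1 k2 => pow_add _ _ _),
        Finsupp.prod_single_index (h := fun a k => w a ^ k) (pow_zero (w a)), ih, pow_one]
      simp only [hG, Multiset.map_cons, Multiset.sum_cons, pow_add]
      rfl
  have hFS : HasSum (fun f : TreeT d →₀ ℕ => f.prod fun a k => w a ^ k) S := by
    refine (Equiv.hasSum_iff (Multiset.toFinsupp (α := TreeT d)).toEquiv).mp ?_
    have hfe : ((fun f : TreeT d →₀ ℕ => f.prod fun a k => w a ^ k)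
        ∘ ⇑(Multiset.toFinsupp (α := TreeT d)).toEquiv) = G := funext fun m => hclaim m
    rw [hfe]
    exact hGS
  have hProd : HasProd (fun t => (1 - w t)⁻¹) S := hasProd_inv_one_sub w h0w h1w hFS
  -- summability of the log family
  have hw_sum : Summable w := by
    have h := hGS.summable.comp_injective
      (f := G) (i := fun t : TreeT d => ({t} : Multiset (TreeT d)))
      (fun a b hab => Multiset.singleton_inj.mp hab)
    refine h.congr fun t => ?_
    simp [hG]
    rfl
  have hN : Summable (fun t => -Real.log (1 - w t)) := by
    refine Summable.of_nonneg_of_le (fun t => ?_) (fun t => ?_) (hw_sum.mul_left (1 - x)⁻¹)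
    · rw [neg_nonneg]
      exact Real.log_nonpos (by linarith [h1w t]) (by linarith [h0w t])
    · have h1wt : 0 < 1 - w t := by linarith [h1w t]
      have hwt_le : w t ≤ x :=
        pow_le_of_le_one hx0.le hx1.le (Nat.one_le_iff_ne_zero.mp (one_le_treeSize d t))
      have e0 : -Real.log (1 - w t) = Real.log (1 - w t)⁻¹ := (Real.log_inv _).symm
      have e1 : Real.log (1 - w t)⁻¹ ≤ (1 - w t)⁻¹ - 1 :=
        Real.log_le_sub_one_of_pos (inv_pos.mpr h1wt)
      have e2 : (1 - w t)⁻¹ - 1 = w t / (1 - w t) := by field_simp; ring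
      have e3 : w t / (1 - w t) ≤ w t / (1 - x) := by
        gcongr
        all_goals linarith [h0w t, hwt_le]
      rw [e0]
      calc Real.log (1 - w t)⁻¹ ≤ (1 - w t)⁻¹ - 1 := e1
        _ = w t / (1 - w t) := e2
        _ ≤ w t / (1 - x) := e3
        _ = (1 - x)⁻¹ * w t := by rw [div_eq_inv_mul]
  set L : ℝ := ∑' t, -Real.log (1 - w t) with hL
  have hProd2 : HasProd (fun t => (1 - w t)⁻¹) (Real.exp L) := by
    have hfe : (Real.exp ∘ fun t : TreeT d => -Real.log (1 - w t)) = fun t => (1 - w t)⁻¹ := by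
      funext t
      have h1wt : 0 < 1 - w t := by linarith [h1w t]
      simp only [Function.comp_apply]
      rw [Real.exp_neg, Real.exp_log h1wt]
    have h := hN.hasSum.rexp
    rwa [hfe] at h
  have hexpL : Real.exp L = S := hProd2.unique hProd
  have hlogS : Real.log S = L := by rw [← hexpL, Real.log_exp]
  constructor
  · refine (hN.mul_left (1/2 : ℝ)).congr fun t => ?_
    ring
  · have e4 : (fun t : TreeT d => -(1 / 2 : ℝ) * Real.log (1 - x ^ treeSize d t))
        = fun t => (1/2 : ℝ) * (-Real.log (1 - w t)) := by
      funext t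
      ring
    rw [e4, tsum_mul_left, ← hL, ← hlogS, hS]
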